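/- arXiv:2112.12601 — 3 statements merged into one kernel-verified Lean document; each statement's English description precedes it below -/
import Mathlib

section
/- For any skew-symmetric 2N×2N matrix A and any 2N×2N matrix B over a commutative ring, Pf(B A Bᵀ) = det(B) · Pf(A). -/
open Finset Matrix

/-- The Pfaffian of a `2n × 2n` matrix, defined as the signed sum over perfect
matchings of `{0, …, 2n−1}`. -/
def pfaffian {R : Type*} [CommRing R] {n : ℕ}
    (A : Matrix (Fin (2 * n)) (Fin (2 * n)) R) : R :=
  ∑ σ ∈ Finset.univ.filter (fun σ : Equiv.Perm (Fin (2 * n)) =>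
      (∀ i : Fin n, σ ⟨2 * i.1, by have := i.isLt; omega⟩ <
          σ ⟨2 * i.1 + 1, by have := i.isLt; omega⟩) ∧
      (∀ i j : Fin n, i < j → σ ⟨2 * i.1, by have := i.isLt; omega⟩ <
          σ ⟨2 * j.1, by have := j.isLt; omega⟩)),
    (Equiv.Perm.sign σ : ℤ) •
      ∏ i : Fin n, A (σ ⟨2 * i.1, by have := i.isLt; omega⟩)
        (σ ⟨2 * i.1 + 1, by have := i.isLt; omega⟩)

namespace PfAux

open Equiv Equiv.Perm

variable {n : ℕ}

@[simp] lemma two_mul_mod (k : ℕ) : 2 * k % 2 = 0 := by omega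
@[simp] lemma two_mul_add_one_mod (k : ℕ) : (2 * k + 1) % 2 = 1 := by omega

def ev (i : Fin n) : Fin (2 * n) := ⟨2 * i.1, by have := i.isLt; omega⟩
def od (i : Fin n) : Fin (2 * n) := ⟨2 * i.1 + 1, by have := i.isLt; omega⟩
def pIdx (x : Fin (2 * n)) : Fin n := ⟨x.1 / 2, by have := x.isLt; omega⟩

@[simp] lemma ev_val (i : Fin n) : (ev i).1 = 2 * i.1 := rfl
@[simp] lemma od_val (i : Fin n) : (od i).1 = 2 * i.1 + 1 := rfl
@[simp] lemma pIdx_val (x : Fin (2 * n)) : (pIdx x).1 = x.1 / 2 := rfl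

@[simp] lemma pIdx_ev (i : Fin n) : pIdx (ev i) = i := by
  ext; rw [pIdx_val, ev_val]; omega

@[simp] lemma pIdx_od (i : Fin n) : pIdx (od i) = i := by
  ext; rw [pIdx_val, od_val]; omega

lemma ev_mod (i : Fin n) : (ev i).1 % 2 = 0 := by rw [ev_val]; omega

lemma od_mod (i : Fin n) : (od i).1 % 2 = 1 := by rw [od_val]; omega

lemma eq_ev_or_od (x : Fin (2 * n)) : x = ev (pIdx x) ∨ x = od (pIdx x) := by
  rcases Nat.mod_two_eq_zero_or_one x.1 with h | h
  · left; ext; rw [ev_val, pIdx_val]; omega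
  · right; ext; rw [od_val, pIdx_val]; omega

lemma ev_injective : Function.Injective (ev (n := n)) := by
  intro i j h
  have := congrArg Fin.val h
  rw [ev_val, ev_val] at this
  ext; omega

lemma od_injective : Function.Injective (od (n := n)) := by
  intro i j h
  have := congrArg Fin.val h
  rw [od_val, od_val] at this
  ext; omega

lemma ev_ne_od (i j : Fin n) : ev i ≠ od j := by
  intro h
  have := congrArg Fin.val h
  rw [ev_val, od_val] at this
  omega

lemma swapAdjFun_invol :
    Function.Involutive (fun x : Fin (2 * n) =>
      (⟨if x.1 % 2 = 0 then x.1 + 1 else x.1 - 1, by have := x.isLt; split <;> omega⟩ :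
        Fin (2 * n))) := by
  intro x
  ext
  simp only
  split <;> split <;> omega

def swapAdj : Perm (Fin (2 * n)) := Function.Involutive.toPerm _ swapAdjFun_invol

@[simp] lemma swapAdj_val (x : Fin (2 * n)) :
    (swapAdj x).1 = if x.1 % 2 = 0 then x.1 + 1 else x.1 - 1 :=
  rfl

@[simp] lemma swapAdj_ev (i : Fin n) : swapAdj (ev i) = od i := by
  ext; rw [swapAdj_val, ev_val, od_val]; split <;> omega

@[simp] lemma swapAdj_od (i : Fin n) : swapAdj (od i) = ev i := by
  ext; rw [swapAdj_val, od_val, ev_val]; split <;> omega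

@[simp] lemma swapAdj_swapAdj (x : Fin (2 * n)) : swapAdj (swapAdj x) = x :=
  swapAdjFun_invol x

@[simp] lemma pIdx_swapAdj (x : Fin (2 * n)) : pIdx (swapAdj x) = pIdx x := by
  ext; rw [pIdx_val, pIdx_val, swapAdj_val]; split <;> omega

lemma swapAdj_mul_self : (swapAdj (n := n)) * swapAdj = 1 := by
  ext x
  simp [Perm.mul_apply]

@[simp] lemma swapAdj_inv : (swapAdj (n := n))⁻¹ = swapAdj := by
  rw [eq_comm, eq_inv_iff_mul_eq_one, swapAdj_mul_self]

variable {R : Type*} [CommRing R]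

/-- The set of "normalized matching" permutations (as in the definition of the Pfaffian). -/
def Mset (n : ℕ) : Finset (Perm (Fin (2 * n))) :=
  Finset.univ.filter (fun σ : Perm (Fin (2 * n)) =>
    (∀ i : Fin n, σ (ev i) < σ (od i)) ∧
    (∀ i j : Fin n, i < j → σ (ev i) < σ (ev j)))

/-- The centralizer of `swapAdj`: permutations preserving the pair structure. -/
def Hset (n : ℕ) : Finset (Perm (Fin (2 * n))) :=
  Finset.univ.filter (fun π => π * swapAdj = swapAdj * π)

lemma mem_Mset {σ : Perm (Fin (2 * n))} :
    σ ∈ Mset n ↔ (∀ i : Fin n, σ (ev i) < σ (od i)) ∧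
      (∀ i j : Fin n, i < j → σ (ev i) < σ (ev j)) := by
  simp [Mset]

lemma mem_Hset {π : Perm (Fin (2 * n))} :
    π ∈ Hset n ↔ π * swapAdj = swapAdj * π := by
  simp [Hset]

lemma Hset_swap {π : Perm (Fin (2 * n))} (h : π ∈ Hset n) (x : Fin (2 * n)) :
    π (swapAdj x) = swapAdj (π x) := by
  have h2 := congrArg (fun p : Perm (Fin (2 * n)) => p x) (mem_Hset.mp h)
  simpa [Perm.mul_apply] using h2

lemma one_mem_Hset : (1 : Perm (Fin (2 * n))) ∈ Hset n := by
  simp [mem_Hset]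

/-- The "full sum over permutations" version of the Pfaffian. -/
def P (A : Matrix (Fin (2 * n)) (Fin (2 * n)) R) : R :=
  ∑ τ : Perm (Fin (2 * n)), (Equiv.Perm.sign τ : ℤ) •
    ∏ i : Fin n, A (τ (ev i)) (τ (od i))

lemma pfaffian_eq (A : Matrix (Fin (2 * n)) (Fin (2 * n)) R) :
    pfaffian A = ∑ σ ∈ Mset n, (Equiv.Perm.sign σ : ℤ) •
      ∏ i : Fin n, A (σ (ev i)) (σ (od i)) := rfl

/-- The equivalence `Fin n × Bool ≃ Fin (2n)`. -/
def pairEquiv : Fin n × Bool ≃ Fin (2 * n) where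
  toFun p := if p.2 then od p.1 else ev p.1
  invFun x := (pIdx x, decide (x.1 % 2 = 1))
  left_inv := by
    rintro ⟨i, b⟩
    cases b <;> simp
  right_inv := by
    intro x
    rcases eq_ev_or_od x with h | h <;> rw [h] <;> simp

@[simp] lemma pairEquiv_false (i : Fin n) : pairEquiv (i, false) = ev i := rfl
@[simp] lemma pairEquiv_true (i : Fin n) : pairEquiv (i, true) = od i := rfl
@[simp] lemma pairEquiv_symm_ev (i : Fin n) : pairEquiv.symm (ev i) = (i, false) := by
  rw [Equiv.symm_apply_eq, pairEquiv_false]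
@[simp] lemma pairEquiv_symm_od (i : Fin n) : pairEquiv.symm (od i) = (i, true) := by
  rw [Equiv.symm_apply_eq, pairEquiv_true]

/-- Splitting a product over `Fin (2n)` into products over pairs. -/
lemma prod_pairs {M : Type*} [CommMonoid M] (F : Fin (2 * n) → M) :
    ∏ x : Fin (2 * n), F x = ∏ i : Fin n, F (ev i) * F (od i) := by
  rw [← Equiv.prod_comp (pairEquiv (n := n)) F, Fintype.prod_prod_type]
  refine Finset.prod_congr rfl fun i _ => ?_
  rw [Fintype.prod_bool, pairEquiv_true, pairEquiv_false, mul_comm]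

/-- The block permutation of `Fin (2n)` induced by a permutation of the pairs. -/
def blMap (q : Perm (Fin n)) : Perm (Fin (2 * n)) :=
  pairEquiv.permCongr (Equiv.prodCongrLeft (fun _ : Bool => q))

@[simp] lemma blMap_ev (q : Perm (Fin n)) (i : Fin n) : blMap q (ev i) = ev (q i) := by
  simp [blMap, Equiv.permCongr_apply, Equiv.prodCongrLeft]

@[simp] lemma blMap_od (q : Perm (Fin n)) (i : Fin n) : blMap q (od i) = od (q i) := by
  simp [blMap, Equiv.permCongr_apply, Equiv.prodCongrLeft]

lemma sign_blMap (q : Perm (Fin n)) : Equiv.Perm.sign (blMap q) = 1 := by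
  rw [blMap, Equiv.Perm.sign_permCongr, Equiv.Perm.sign_prodCongrLeft]
  simp [Fintype.prod_bool]

/-- The permutation swapping `ev i ↔ od i` for `i ∈ F`. -/
def swF (F : Finset (Fin n)) : Perm (Fin (2 * n)) :=
  Function.Involutive.toPerm (fun x => if pIdx x ∈ F then swapAdj x else x) (by
    intro x
    by_cases h : pIdx x ∈ F <;> simp [h])

@[simp] lemma swF_apply (F : Finset (Fin n)) (x : Fin (2 * n)) :
    swF F x = if pIdx x ∈ F then swapAdj x else x := rfl

lemma swF_empty : swF (∅ : Finset (Fin n)) = 1 := by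
  ext x
  simp

lemma swF_insert {F : Finset (Fin n)} {a : Fin n} (ha : a ∉ F) :
    swF (insert a F) = Equiv.swap (ev a) (od a) * swF F := by
  ext x
  rcases eq_ev_or_od x with h | h <;> rw [h] <;> set i := pIdx x with hi
  · simp only [Perm.mul_apply, swF_apply, pIdx_ev, swapAdj_ev, Finset.mem_insert]
    by_cases hia : i = a
    · subst hia
      simp [ha, Equiv.swap_apply_left]
    · by_cases hiF : i ∈ F
      · simp only [hia, hiF, or_true, if_true]
        exact congrArg Fin.val (Equiv.swap_apply_of_ne_of_ne (Ne.symm (ev_ne_od a i))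
          (fun hc => hia (od_injective hc))).symm
      · simp only [hia, hiF, or_self, false_or, if_false]
        exact congrArg Fin.val (Equiv.swap_apply_of_ne_of_ne (fun hc => hia (ev_injective hc))
          (ev_ne_od i a)).symm
  · simp only [Perm.mul_apply, swF_apply, pIdx_od, swapAdj_od, Finset.mem_insert]
    by_cases hia : i = a
    · subst hia
      simp [ha, Equiv.swap_apply_right]
    · by_cases hiF : i ∈ F
      · simp only [hia, hiF, or_true, if_true]
        exact congrArg Fin.val (Equiv.swap_apply_of_ne_of_ne (fun hc => hia (ev_injective hc))
          (ev_ne_od i a)).symm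
      · simp only [hia, hiF, or_self, false_or, if_false]
        exact congrArg Fin.val (Equiv.swap_apply_of_ne_of_ne (Ne.symm (ev_ne_od a i))
          (fun hc => hia (od_injective hc))).symm

lemma sign_swF (F : Finset (Fin n)) : Equiv.Perm.sign (swF F) = (-1) ^ F.card := by
  classical
  induction F using Finset.induction_on with
  | empty => simp [swF_empty]
  | insert a F ha ih =>
    rw [swF_insert ha, _root_.map_mul, ih, Equiv.Perm.sign_swap (ev_ne_od a a),
      Finset.card_insert_of_notMem ha, pow_succ]
    exact mul_comm _ _


/-- Every pair-structure preserving permutation decomposes into a block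
permutation and within-pair swaps. -/
lemma hperm_decomp {π : Perm (Fin (2 * n))} (hπ : π ∈ Hset n) :
    ∃ (q : Perm (Fin n)) (F : Finset (Fin n)),
      π = blMap q * swF F ∧
      (∀ i, π (ev i) = if i ∈ F then od (q i) else ev (q i)) ∧
      (∀ i, π (od i) = if i ∈ F then ev (q i) else od (q i)) := by
  classical
  set p : Fin n → Fin n := fun i => pIdx (π (ev i)) with hp
  have hodswap : ∀ i : Fin n, π (od i) = swapAdj (π (ev i)) := by
    intro i
    rw [← swapAdj_ev, Hset_swap hπ]
  have hmem : ∀ i : Fin n, π (ev i) = ev (p i) ∨ π (ev i) = od (p i) := fun i =>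
    eq_ev_or_od (π (ev i))
  have hpinj : Function.Injective p := by
    intro i j hij
    by_contra hne
    rcases hmem i with h1 | h1 <;> rcases hmem j with h2 | h2
    · have h3 : π (ev i) = π (ev j) := by rw [h1, h2, hij]
      exact hne (ev_injective (π.injective h3))
    · have h3 : π (od j) = π (ev i) := by
        rw [hodswap, h2, swapAdj_od, ← hij, ← h1]
      exact ev_ne_od i j (π.injective h3).symm
    · have h3 : π (od i) = π (ev j) := by
        rw [hodswap, h1, swapAdj_od, hij, ← h2]
      exact ev_ne_od j i (π.injective h3).symm
    · have h3 : π (ev i) = π (ev j) := by rw [h1, h2, hij]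
      exact hne (ev_injective (π.injective h3))
  set q : Perm (Fin n) := Equiv.ofBijective p (Finite.injective_iff_bijective.mp hpinj) with hq
  have hqapp : ∀ i, q i = p i := fun i => rfl
  set F : Finset (Fin n) := Finset.univ.filter (fun i => π (ev i) = od (p i)) with hF
  have hmemF : ∀ i, i ∈ F ↔ π (ev i) = od (p i) := by
    intro i; simp [hF]
  have hev : ∀ i, π (ev i) = if i ∈ F then od (q i) else ev (q i) := by
    intro i
    by_cases h : i ∈ F
    · rw [if_pos h, hqapp]; exact (hmemF i).mp h
    · rw [if_neg h, hqapp]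
      rcases hmem i with h1 | h1
      · exact h1
      · exact absurd ((hmemF i).mpr h1) h
  have hod : ∀ i, π (od i) = if i ∈ F then ev (q i) else od (q i) := by
    intro i
    rw [hodswap, hev]
    by_cases h : i ∈ F <;> simp [h]
  refine ⟨q, F, ?_, hev, hod⟩
  ext x
  rcases eq_ev_or_od x with h | h <;> rw [h] <;> set i := pIdx x
  · rw [Perm.mul_apply, swF_apply, pIdx_ev, hev i]
    by_cases h : i ∈ F <;> simp [h]
  · rw [Perm.mul_apply, swF_apply, pIdx_od, hod i]
    by_cases h : i ∈ F <;> simp [h]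

/-- Multiplying on the right by an element of `Hset` does not change the
Pfaffian summand, for skew-symmetric `A`. -/
lemma term_mul_H {A : Matrix (Fin (2 * n)) (Fin (2 * n)) R}
    (hA : ∀ x y, A y x = -A x y) (μ : Perm (Fin (2 * n)))
    {π : Perm (Fin (2 * n))} (hπ : π ∈ Hset n) :
    (Equiv.Perm.sign (μ * π) : ℤ) • ∏ i : Fin n, A ((μ * π) (ev i)) ((μ * π) (od i)) =
      (Equiv.Perm.sign μ : ℤ) • ∏ i : Fin n, A (μ (ev i)) (μ (od i)) := by
  classical
  obtain ⟨q, F, hdec, hev, hod⟩ := hperm_decomp hπ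
  have hsgn : Equiv.Perm.sign π = (-1) ^ F.card := by
    rw [hdec, _root_.map_mul, sign_blMap, sign_swF, one_mul]
  have h1 : ∀ i : Fin n, A (μ (π (ev i))) (μ (π (od i))) =
      (if i ∈ F then (-1 : R) else 1) * A (μ (ev (q i))) (μ (od (q i))) := by
    intro i
    rw [hev, hod]
    by_cases h : i ∈ F
    · simp only [h, if_true, neg_one_mul]
      exact hA _ _
    · simp [h]
  have hprod : ∏ i : Fin n, A (μ (π (ev i))) (μ (π (od i))) =
      (-1 : R) ^ F.card * ∏ i : Fin n, A (μ (ev i)) (μ (od i)) := by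
    rw [Finset.prod_congr rfl (fun i _ => h1 i), Finset.prod_mul_distrib]
    congr 1
    · rw [Finset.prod_ite_mem, Finset.univ_inter, Finset.prod_const]
    · exact Equiv.prod_comp q (fun k => A (μ (ev k)) (μ (od k)))
  simp only [Perm.mul_apply]
  rw [hprod, _root_.map_mul, hsgn]
  rw [zsmul_eq_mul, zsmul_eq_mul]
  push_cast
  rw [show ((Equiv.Perm.sign μ : ℤ) : R) * ((-1 : R) ^ F.card) * ((-1 : R) ^ F.card *
    ∏ i : Fin n, A (μ (ev i)) (μ (od i))) = ((Equiv.Perm.sign μ : ℤ) : R) *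
    (((-1 : R) ^ F.card * (-1 : R) ^ F.card) * ∏ i : Fin n, A (μ (ev i)) (μ (od i))) by ring]
  rw [← pow_add, ← two_mul, pow_mul]
  norm_num


/-- The fixed-point-free involution attached to a permutation `τ`. -/
def ione (τ : Perm (Fin (2 * n))) : Perm (Fin (2 * n)) := τ * swapAdj * τ⁻¹

lemma ione_ione (τ : Perm (Fin (2 * n))) (x : Fin (2 * n)) : ione τ (ione τ x) = x := by
  simp [ione, Perm.mul_apply]

lemma ione_ne (τ : Perm (Fin (2 * n))) (x : Fin (2 * n)) : ione τ x ≠ x := by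
  simp only [ione, Perm.mul_apply]
  intro h
  have h2 := τ.injective ((show τ (τ⁻¹ x) = x from τ.apply_symm_apply x) ▸ h)
  -- h : τ (swapAdj (τ⁻¹ x)) = x
  have h3 : swapAdj (τ⁻¹ x) = τ⁻¹ x := by
    apply τ.injective
    rw [h, show τ (τ⁻¹ x) = x from τ.apply_symm_apply x]
  rcases eq_ev_or_od (τ⁻¹ x) with hc | hc <;> rw [hc] at h3 <;>
    simp only [swapAdj_ev, swapAdj_od] at h3
  · exact ev_ne_od _ _ h3.symm
  · exact ev_ne_od _ _ h3

/-- The starting points of the pairs of the involution. -/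
def sSet (τ : Perm (Fin (2 * n))) : Finset (Fin (2 * n)) :=
  Finset.univ.filter (fun x => x < ione τ x)

lemma card_sSet (τ : Perm (Fin (2 * n))) : (sSet τ).card = n := by
  classical
  have himg : Finset.univ.filter (fun x => ione τ x < x) = (sSet τ).image (ione τ) := by
    ext y
    simp only [Finset.mem_filter, Finset.mem_univ, true_and, Finset.mem_image, sSet]
    constructor
    · intro hy
      exact ⟨ione τ y, by simpa [ione_ione] using hy, ione_ione τ y⟩
    · rintro ⟨x, hx, rfl⟩
      simpa [ione_ione] using hx
  have hinj : Set.InjOn (ione τ) (sSet τ) := fun a _ b _ h => by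
    have := congrArg (ione τ) h
    rwa [ione_ione, ione_ione] at this
  have hcard : (Finset.univ.filter (fun x => ione τ x < x)).card = (sSet τ).card := by
    rw [himg, Finset.card_image_of_injOn hinj]
  have hsplit : (sSet τ).card +
      (Finset.univ.filter (fun x => ¬ x < ione τ x)).card = Fintype.card (Fin (2 * n)) := by
    rw [← Finset.card_univ]
    exact Finset.card_filter_add_card_filter_not _
  have hcongr : Finset.univ.filter (fun x : Fin (2 * n) => ¬ x < ione τ x) =
      Finset.univ.filter (fun x => ione τ x < x) := by
    apply Finset.filter_congr
    intro x _
    simp only [not_lt, iff_iff_implies_and_implies]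
    constructor
    · intro h
      exact lt_of_le_of_ne h (ione_ne τ x)
    · intro h
      exact le_of_lt h
  rw [hcongr, hcard] at hsplit
  simp only [Fintype.card_fin] at hsplit
  omega

lemma mem_sSet {τ : Perm (Fin (2 * n))} {x : Fin (2 * n)} :
    x ∈ sSet τ ↔ x < ione τ x := by simp [sSet]

/-- The canonical representative of the coset `τ * Hset`. -/
noncomputable def normalize (τ : Perm (Fin (2 * n))) : Perm (Fin (2 * n)) :=
  Equiv.ofBijective
    (fun x => if x.1 % 2 = 0 then (sSet τ).orderEmbOfFin (card_sSet τ) (pIdx x)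
      else ione τ ((sSet τ).orderEmbOfFin (card_sSet τ) (pIdx x)))
    (by
      apply Finite.injective_iff_bijective.mp
      intro x y hxy
      set oe := (sSet τ).orderEmbOfFin (card_sSet τ)
      have hmemoe : ∀ i, oe i ∈ sSet τ := fun i => Finset.orderEmbOfFin_mem _ _ _
      dsimp only at hxy
      have hcross : ∀ i j : Fin n, oe i ≠ ione τ (oe j) := by
        intro i j h
        have h1 := mem_sSet.mp (hmemoe i)
        have h2 := mem_sSet.mp (hmemoe j)
        rw [h] at h1
        rw [ione_ione] at h1
        exact absurd (h1.trans h2) (lt_irrefl _)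
      rcases eq_ev_or_od x with hx | hx <;> rcases eq_ev_or_od y with hy | hy <;>
        rw [hx, hy] <;>
        rw [hx] at hxy <;> rw [hy] at hxy <;>
        simp only [ev_mod, od_mod, pIdx_ev, pIdx_od, if_pos, if_neg, one_ne_zero,
          reduceIte] at hxy
      · rw [oe.injective hxy]
      · exact absurd hxy (hcross _ _)
      · exact absurd hxy.symm (hcross _ _)
      · have := (Equiv.injective _ ) hxy
        rw [oe.injective this])

lemma normalize_ev (τ : Perm (Fin (2 * n))) (i : Fin n) :
    normalize τ (ev i) = (sSet τ).orderEmbOfFin (card_sSet τ) i := by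
  show (if (ev i).1 % 2 = 0 then _ else _) = _
  rw [if_pos (ev_mod i), pIdx_ev]

lemma normalize_od (τ : Perm (Fin (2 * n))) (i : Fin n) :
    normalize τ (od i) = ione τ ((sSet τ).orderEmbOfFin (card_sSet τ) i) := by
  show (if (od i).1 % 2 = 0 then _ else _) = _
  rw [if_neg (by rw [od_mod]; omega), pIdx_od]

lemma normalize_mem_Mset (τ : Perm (Fin (2 * n))) : normalize τ ∈ Mset n := by
  rw [mem_Mset]
  constructor
  · intro i
    rw [normalize_ev, normalize_od]
    exact mem_sSet.mp (Finset.orderEmbOfFin_mem _ _ _)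
  · intro i j hij
    rw [normalize_ev, normalize_ev]
    exact ((sSet τ).orderEmbOfFin (card_sSet τ)).strictMono hij

lemma normalize_spec (τ : Perm (Fin (2 * n))) (x : Fin (2 * n)) :
    ione τ (normalize τ x) = normalize τ (swapAdj x) := by
  rcases eq_ev_or_od x with h | h <;> rw [h]
  · rw [swapAdj_ev, normalize_ev, normalize_od]
  · rw [swapAdj_od, normalize_od, normalize_ev, ione_ione]

lemma normalize_inv_mul_mem_Hset (τ : Perm (Fin (2 * n))) :
    (normalize τ)⁻¹ * τ ∈ Hset n := by
  rw [mem_Hset]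
  set μ := normalize τ
  have key : ione τ * μ = μ * swapAdj := by
    ext x
    rw [Perm.mul_apply, Perm.mul_apply]
    exact congrArg Fin.val (normalize_spec τ x)
  have key2 : τ * swapAdj * τ⁻¹ * μ = μ * swapAdj := key
  have hconj : μ * swapAdj * μ⁻¹ = τ * swapAdj * τ⁻¹ := by
    calc μ * swapAdj * μ⁻¹ = (τ * swapAdj * τ⁻¹ * μ) * μ⁻¹ := by rw [key2]
    _ = τ * swapAdj * τ⁻¹ := by group
  conv_rhs => rw [show swapAdj (n := n) = μ⁻¹ * (μ * swapAdj * μ⁻¹) * μ by group, hconj]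
  group


lemma ione_mul {μ π : Perm (Fin (2 * n))} (hπ : π ∈ Hset n) :
    ione (μ * π) = μ * swapAdj * μ⁻¹ := by
  rw [ione, _root_.mul_inv_rev]
  have h := mem_Hset.mp hπ
  calc μ * π * swapAdj * (π⁻¹ * μ⁻¹) = μ * (π * swapAdj * π⁻¹) * μ⁻¹ := by group
    _ = μ * (swapAdj * π * π⁻¹) * μ⁻¹ := by rw [h]
    _ = μ * swapAdj * μ⁻¹ := by group

lemma normalize_mul {μ π : Perm (Fin (2 * n))} (hμ : μ ∈ Mset n) (hπ : π ∈ Hset n) :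
    normalize (μ * π) = μ := by
  obtain ⟨hμ1, hμ2⟩ := mem_Mset.mp hμ
  have hione : ∀ x, ione (μ * π) (μ x) = μ (swapAdj x) := by
    intro x
    rw [ione_mul hπ]
    simp [Perm.mul_apply]
  have hmem : ∀ i : Fin n, μ (ev i) ∈ sSet (μ * π) := by
    intro i
    rw [mem_sSet, hione, swapAdj_ev]
    exact hμ1 i
  have hmono : StrictMono (fun i : Fin n => μ (ev i)) := by
    intro i j hij
    exact hμ2 i j hij
  have hoe := Finset.orderEmbOfFin_unique (card_sSet (μ * π)) hmem hmono
  have hoe' : ∀ i : Fin n, (sSet (μ * π)).orderEmbOfFin (card_sSet (μ * π)) i = μ (ev i) :=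
    fun i => (congrFun hoe i).symm
  ext x
  rcases eq_ev_or_od x with h | h <;> rw [h] <;> set i := pIdx x
  · rw [normalize_ev, hoe' i]
  · rw [normalize_od, hoe' i, hione, swapAdj_ev]

/-- Decomposition of a sum over all permutations into `Mset × Hset`. -/
lemma sum_decomp {M : Type*} [AddCommMonoid M] (f : Perm (Fin (2 * n)) → M) :
    ∑ τ : Perm (Fin (2 * n)), f τ = ∑ μ ∈ Mset n, ∑ π ∈ Hset n, f (μ * π) := by
  classical
  have hstep : ∑ τ : Perm (Fin (2 * n)), f τ =
      ∑ x ∈ Mset n ×ˢ Hset n, f (x.1 * x.2) := ?_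
  · rw [hstep]
    exact Finset.sum_product' (s := Mset n) (t := Hset n) (f := fun a b => f (a * b))
  apply Finset.sum_nbij' (i := fun τ => (normalize τ, (normalize τ)⁻¹ * τ))
    (j := fun x => x.1 * x.2)
  · intro τ _
    rw [Finset.mem_product]
    exact ⟨normalize_mem_Mset τ, normalize_inv_mul_mem_Hset τ⟩
  · intro x _
    exact Finset.mem_univ _
  · intro τ _
    simp
  · intro x hx
    rw [Finset.mem_product] at hx
    have h1 := normalize_mul hx.1 hx.2
    rw [h1]
    have h2 : x.1⁻¹ * (x.1 * x.2) = x.2 := by group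
    rw [h2]
  · intro τ _
    simp

/-- The full permutation sum is `|Hset|` times the Pfaffian. -/
lemma P_eq_card_smul {A : Matrix (Fin (2 * n)) (Fin (2 * n)) R}
    (hA : ∀ x y, A y x = -A x y) :
    P A = (Hset n).card • pfaffian A := by
  rw [P, sum_decomp (fun τ => (Equiv.Perm.sign τ : ℤ) • ∏ i : Fin n, A (τ (ev i)) (τ (od i)))]
  rw [pfaffian_eq, Finset.smul_sum]
  refine Finset.sum_congr rfl fun μ hμ => ?_
  rw [Finset.sum_congr rfl (fun π hπ => term_mul_H hA μ hπ), Finset.sum_const]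


lemma entry_BABt (A B : Matrix (Fin (2 * n)) (Fin (2 * n)) R) (p q : Fin (2 * n)) :
    (B * A * Bᵀ) p q = ∑ c : Fin (2 * n) × Fin (2 * n), B p c.1 * A c.1 c.2 * B q c.2 := by
  rw [Fintype.sum_prod_type]
  simp only [Matrix.mul_apply, Matrix.transpose_apply, Finset.sum_mul]
  rw [Finset.sum_comm]

def hfun (g : Fin n → Fin (2 * n) × Fin (2 * n)) : Fin (2 * n) → Fin (2 * n) := fun x =>
  if x.1 % 2 = 0 then (g (pIdx x)).1 else (g (pIdx x)).2

@[simp] lemma hfun_ev (g : Fin n → Fin (2 * n) × Fin (2 * n)) (i : Fin n) :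
    hfun g (ev i) = (g i).1 := by
  rw [hfun, if_pos (ev_mod i), pIdx_ev]

@[simp] lemma hfun_od (g : Fin n → Fin (2 * n) × Fin (2 * n)) (i : Fin n) :
    hfun g (od i) = (g i).2 := by
  rw [hfun, if_neg (by rw [od_mod]; omega), pIdx_od]

def funEquiv : (Fin (2 * n) → Fin (2 * n)) ≃ (Fin n → Fin (2 * n) × Fin (2 * n)) where
  toFun h := fun i => (h (ev i), h (od i))
  invFun := hfun
  left_inv h := funext fun x => by
    rcases eq_ev_or_od x with hx | hx <;> rw [hx] <;> simp
  right_inv g := funext fun i => by simp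

lemma P_conj (A B : Matrix (Fin (2 * n)) (Fin (2 * n)) R) :
    P (B * A * Bᵀ) = B.det * P A := by
  classical
  calc P (B * A * Bᵀ)
      = ∑ τ : Perm (Fin (2 * n)), (Equiv.Perm.sign τ : ℤ) •
          ∑ g ∈ Fintype.piFinset (fun _ : Fin n =>
            (Finset.univ : Finset (Fin (2 * n) × Fin (2 * n)))),
          ∏ i : Fin n,
            (B (τ (ev i)) (g i).1 * A (g i).1 (g i).2 * B (τ (od i)) (g i).2) := by
        refine Finset.sum_congr rfl fun τ _ => ?_
        have hexp := Finset.prod_univ_sum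
          (t := fun _ : Fin n => (Finset.univ : Finset (Fin (2 * n) × Fin (2 * n))))
          (f := fun i c => B (τ (ev i)) c.1 * A c.1 c.2 * B (τ (od i)) c.2)
        rw [← hexp]
        congr 1
        exact Finset.prod_congr rfl fun i _ => entry_BABt A B _ _
    _ = ∑ g : Fin n → Fin (2 * n) × Fin (2 * n), ∑ τ : Perm (Fin (2 * n)),
          (Equiv.Perm.sign τ : ℤ) • ∏ i : Fin n,
            (B (τ (ev i)) (g i).1 * A (g i).1 (g i).2 * B (τ (od i)) (g i).2) := by
        simp only [Fintype.piFinset_univ, Finset.smul_sum]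
        exact Finset.sum_comm
    _ = ∑ g : Fin n → Fin (2 * n) × Fin (2 * n),
          (∏ i : Fin n, A (g i).1 (g i).2) * (B.submatrix id (hfun g)).det := by
        refine Finset.sum_congr rfl fun g _ => ?_
        have hsplit : ∀ τ : Perm (Fin (2 * n)),
            ∏ i : Fin n, (B (τ (ev i)) (g i).1 * A (g i).1 (g i).2 * B (τ (od i)) (g i).2)
            = (∏ i : Fin n, A (g i).1 (g i).2) * ∏ x : Fin (2 * n), B (τ x) (hfun g x) := by
          intro τ
          rw [prod_pairs (fun x => B (τ x) (hfun g x)), ← Finset.prod_mul_distrib]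
          refine Finset.prod_congr rfl fun i _ => ?_
          simp only [hfun_ev, hfun_od]
          ring
        rw [Finset.sum_congr rfl (fun τ _ => by rw [hsplit τ])]
        rw [Matrix.det_apply']
        rw [Finset.mul_sum]
        refine Finset.sum_congr rfl fun τ _ => ?_
        rw [zsmul_eq_mul]
        have hsub : ∏ i : Fin (2 * n), B.submatrix id (hfun g) (τ i) i
            = ∏ x : Fin (2 * n), B (τ x) (hfun g x) :=
          Finset.prod_congr rfl fun x _ => rfl
        rw [hsub]
        ring
    _ = ∑ h : Fin (2 * n) → Fin (2 * n),
          (∏ i : Fin n, A (h (ev i)) (h (od i))) * (B.submatrix id h).det := by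
        rw [← Equiv.sum_comp (funEquiv (n := n))
          (fun g => (∏ i : Fin n, A (g i).1 (g i).2) * (B.submatrix id (hfun g)).det)]
        refine Finset.sum_congr rfl fun h _ => ?_
        rw [show hfun (funEquiv h) = h from funEquiv.left_inv h]
        rfl
    _ = ∑ h ∈ Finset.univ.filter (fun h : Fin (2 * n) → Fin (2 * n) => Function.Injective h),
          (∏ i : Fin n, A (h (ev i)) (h (od i))) * (B.submatrix id h).det := by
        symm
        apply Finset.sum_filter_of_ne
        intro h _ hne
        by_contra hni
        apply hne
        rw [Function.not_injective_iff] at hni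
        obtain ⟨a, b, hab, hne'⟩ := hni
        rw [Matrix.det_zero_of_column_eq hne' (fun k => by
          simp [Matrix.submatrix_apply, hab])]
        rw [mul_zero]
    _ = ∑ σ : Perm (Fin (2 * n)),
          (∏ i : Fin n, A (σ (ev i)) (σ (od i))) * (B.submatrix id ⇑σ).det := by
        symm
        apply Finset.sum_nbij (i := fun σ : Perm (Fin (2 * n)) => ⇑σ)
        · intro σ _
          simp [Equiv.injective]
        · intro σ₁ _ σ₂ _ h
          exact Equiv.coe_fn_injective h
        · intro h hh
          simp only [Finset.coe_filter, Set.mem_setOf_eq] at hh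
          exact ⟨Equiv.ofBijective h (Finite.injective_iff_bijective.mp hh.2),
            by simp, rfl⟩
        · intro σ _
          rfl
    _ = B.det * P A := by
        rw [P, Finset.mul_sum]
        refine Finset.sum_congr rfl fun σ _ => ?_
        rw [Matrix.det_permute' σ B, zsmul_eq_mul]
        ring


lemma pf_map {S : Type*} [CommRing S] (f : R →+* S) (A : Matrix (Fin (2 * n)) (Fin (2 * n)) R) :
    pfaffian (A.map f) = f (pfaffian A) := by
  rw [pfaffian_eq, pfaffian_eq, map_sum]
  refine Finset.sum_congr rfl fun σ _ => ?_
  rw [map_zsmul, map_prod]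
  simp [Matrix.map_apply]

lemma skew_entry {M : Matrix (Fin (2 * n)) (Fin (2 * n)) R} (h : Mᵀ = -M) :
    ∀ x y, M y x = -M x y := by
  intro x y
  have := congrFun (congrFun h x) y
  simpa [Matrix.transpose_apply] using this

end PfAux

open PfAux in
/-- For skew-symmetric `A` and arbitrary `B` of order `2N` over a commutative
ring, `Pf (B A Bᵀ) = det B · Pf A`. -/
theorem pfaffian_conj {R : Type*} [CommRing R] (N : ℕ)
    (A B : Matrix (Fin (2 * N)) (Fin (2 * N)) R)
    (hA : Aᵀ = -A) (hd : ∀ i, A i i = 0) :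
    pfaffian (B * A * Bᵀ) = B.det * pfaffian A := by
  classical
  set A₀ : Matrix (Fin (2 * N)) (Fin (2 * N))
      (MvPolynomial ((Fin (2 * N) × Fin (2 * N)) ⊕ (Fin (2 * N) × Fin (2 * N))) ℤ) :=
    Matrix.of fun i j =>
    if i < j then MvPolynomial.X (Sum.inl (i, j))
    else if j < i then - MvPolynomial.X (Sum.inl (j, i)) else 0 with hA₀def
  set B₀ : Matrix (Fin (2 * N)) (Fin (2 * N))
      (MvPolynomial ((Fin (2 * N) × Fin (2 * N)) ⊕ (Fin (2 * N) × Fin (2 * N))) ℤ) :=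
    Matrix.of fun i j =>
    MvPolynomial.X (Sum.inr (i, j)) with hB₀def
  have hA₀entry : ∀ x y : Fin (2 * N), A₀ y x = -A₀ x y := by
    intro x y
    rcases lt_trichotomy x y with h | h | h
    · simp [hA₀def, h, asymm h, ne_of_lt h]
    · subst h; simp [hA₀def]
    · simp [hA₀def, h, asymm h, ne_of_gt h]
  have hA₀skew : A₀ᵀ = -A₀ := by
    refine Matrix.ext fun i j => ?_
    simpa [Matrix.transpose_apply] using hA₀entry i j
  have hBABskew : (B₀ * A₀ * B₀ᵀ)ᵀ = -(B₀ * A₀ * B₀ᵀ) := by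
    rw [Matrix.transpose_mul, Matrix.transpose_mul, Matrix.transpose_transpose, hA₀skew]
    rw [Matrix.neg_mul, Matrix.mul_neg, Matrix.mul_assoc]
  have hc : (Hset N).card ≠ 0 := Finset.card_ne_zero_of_mem one_mem_Hset
  have key : pfaffian (B₀ * A₀ * B₀ᵀ) = B₀.det * pfaffian A₀ := by
    have h1 : P (B₀ * A₀ * B₀ᵀ) = (Hset N).card • pfaffian (B₀ * A₀ * B₀ᵀ) :=
      P_eq_card_smul (skew_entry hBABskew)
    have h2 : P A₀ = (Hset N).card • pfaffian A₀ := P_eq_card_smul hA₀entry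
    have h3 := P_conj A₀ B₀
    rw [h1, h2, mul_smul_comm] at h3
    have h5 : (((Hset N).card : ℕ) :
        MvPolynomial ((Fin (2 * N) × Fin (2 * N)) ⊕ (Fin (2 * N) × Fin (2 * N))) ℤ) ≠ 0 := by
      have : (((Hset N).card : ℕ) :
          MvPolynomial ((Fin (2 * N) × Fin (2 * N)) ⊕ (Fin (2 * N) × Fin (2 * N))) ℤ) =
          MvPolynomial.C (((Hset N).card : ℕ) : ℤ) := by
        rw [map_natCast (MvPolynomial.C : ℤ →+*
          MvPolynomial ((Fin (2 * N) × Fin (2 * N)) ⊕ (Fin (2 * N) × Fin (2 * N))) ℤ)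
          ((Hset N).card)]
      rw [this, ne_eq, map_eq_zero_iff _ (MvPolynomial.C_injective _ _)]
      exact_mod_cast hc
    have h6 : (((Hset N).card : ℕ) :
          MvPolynomial ((Fin (2 * N) × Fin (2 * N)) ⊕ (Fin (2 * N) × Fin (2 * N))) ℤ) *
          pfaffian (B₀ * A₀ * B₀ᵀ) =
        (((Hset N).card : ℕ) :
          MvPolynomial ((Fin (2 * N) × Fin (2 * N)) ⊕ (Fin (2 * N) × Fin (2 * N))) ℤ) *
          (B₀.det * pfaffian A₀) := by
      rw [← nsmul_eq_mul, ← nsmul_eq_mul, h3]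
    exact mul_left_cancel₀ h5 h6
  set φ : MvPolynomial ((Fin (2 * N) × Fin (2 * N)) ⊕ (Fin (2 * N) × Fin (2 * N))) ℤ →+* R :=
    MvPolynomial.eval₂Hom (Int.castRingHom R)
    (Sum.elim (fun p => A p.1 p.2) (fun p => B p.1 p.2)) with hφdef
  have hφA : A₀.map φ = A := by
    refine Matrix.ext fun i j => ?_
    rcases lt_trichotomy i j with h | h | h
    · simp [hA₀def, h, hφdef, MvPolynomial.eval₂Hom_X']
    · subst h; simp [hA₀def, hφdef, hd]
    · have hAij := congrFun (congrFun hA i) j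
      simp only [Matrix.transpose_apply, Matrix.neg_apply] at hAij
      simp [hA₀def, hφdef, h, asymm h, not_lt.mpr (le_of_lt h), MvPolynomial.eval₂Hom_X']
      rw [hAij, neg_neg]
  have hφB : B₀.map φ = B := by
    refine Matrix.ext fun i j => ?_
    simp [hB₀def, hφdef, MvPolynomial.eval₂Hom_X']
  have hφmul : (B₀ * A₀ * B₀ᵀ).map φ = B * A * Bᵀ := by
    rw [Matrix.map_mul, Matrix.map_mul, Matrix.transpose_map, hφA, hφB]
  calc pfaffian (B * A * Bᵀ) = pfaffian ((B₀ * A₀ * B₀ᵀ).map φ) := by rw [hφmul]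
    _ = φ (pfaffian (B₀ * A₀ * B₀ᵀ)) := pf_map φ _
    _ = φ (B₀.det * pfaffian A₀) := by rw [key]
    _ = B.det * pfaffian A := by
        rw [_root_.map_mul, RingHom.map_det, RingHom.mapMatrix_apply, ← pf_map φ, hφA, hφB]
end

section
/- The Hermite–Padé approximation conditions reduce to a finite linear system: the condition P̂_k(z) + P_k(z)W(−z) + Q_k(z)Z(−z) = O(1/z^{k+1}) with P_k, P̂_k determined by Q_k is equivalent to ∬ y^{j+1} Q_k(x)/(x(x+y)) dμ(x)dμ(y) = ∫ x^j dμ(x) for j = 0, 1, …, k−1. -/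
open Finset Polynomial Filter Asymptotics


private lemma pair_identity (z xp xq ap aq qz qp : ℝ)
    (hxp : 0 < xp) (hxq : 0 < xq) (hz : xp < z) :
    ap * aq * ((qz - qp) / ((z - xp) * (xp + xq)))
      + (ap * ((qz - qp) / (z - xp))) * (aq / (-z - xq))
      - ap * qp / xp * (aq / (-z - xq))
      + qz * (aq * ap / ((-z - xq) * (xq + xp)))
    = ap * aq * xq * qp / (xp * (xp + xq) * (z + xq)) := by
  have hz0 : 0 < z := hxp.trans hz
  have h1 : z - xp ≠ 0 := sub_ne_zero.2 (ne_of_gt hz)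
  have h2 : z + xq ≠ 0 := by positivity
  have h2' : -z - xq ≠ 0 := by intro h; apply h2; linarith
  have h3 : xp + xq ≠ 0 := by positivity
  have h3' : xq + xp ≠ 0 := by positivity
  have h4 : xp ≠ 0 := ne_of_gt hxp
  field_simp
  ring
set_option maxHeartbeats 1000000 in

private lemma frac_bigO_iff (K k : ℕ) (x c : Fin K → ℝ) (hxp : ∀ p, 0 < x p) :
    ((fun z : ℝ => ∑ q, c q / (z + x q)) =O[atTop] fun z : ℝ => (z ^ (k + 1))⁻¹)
      ↔ ∀ j < k, ∑ q, c q * x q ^ j = 0 := by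
  set G : ℕ → ℝ → ℝ := fun j z => ∑ q, c q * x q ^ j / (z + x q) with hGdef
  set M : ℕ → ℝ := fun j => ∑ q, c q * x q ^ j with hMdef
  have hfun : (fun z : ℝ => ∑ q, c q / (z + x q)) = G 0 := by
    funext z; simp [hGdef]
  rw [hfun]
  have hGtend : ∀ j, Tendsto (G j) atTop (nhds 0) := by
    intro j
    have h : ∀ q : Fin K, q ∈ Finset.univ →
        Tendsto (fun z : ℝ => c q * x q ^ j / (z + x q)) atTop (nhds 0) := fun q _ =>
      tendsto_const_nhds.div_atTop (tendsto_atTop_add_const_right _ _ tendsto_id)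
    simpa [hGdef] using tendsto_finset_sum Finset.univ h
  have hrec : ∀ j, ∀ z : ℝ, 0 < z → z * G j z = M j - G (j + 1) z := by
    intro j z hz
    simp only [hGdef, hMdef, Finset.mul_sum, ← Finset.sum_sub_distrib]
    refine Finset.sum_congr rfl fun q _ => ?_
    have h2 : z + x q ≠ 0 := by have := hxp q; positivity
    field_simp
    ring
  have hpow : ∀ j, (∀ i, i < j → M i = 0) → ∀ z : ℝ, 0 < z →
      z ^ j * G 0 z = (-1 : ℝ) ^ j * G j z := by
    intro j
    induction j with
    | zero => intro _ z _; simp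
    | succ n ih =>
      intro hM z hz
      calc z ^ (n + 1) * G 0 z = z * (z ^ n * G 0 z) := by ring
        _ = z * ((-1 : ℝ) ^ n * G n z) := by
            rw [ih (fun i hi => hM i (Nat.lt_succ_of_lt hi)) z hz]
        _ = (-1 : ℝ) ^ n * (z * G n z) := by ring
        _ = (-1 : ℝ) ^ n * (M n - G (n + 1) z) := by rw [hrec n z hz]
        _ = (-1 : ℝ) ^ (n + 1) * G (n + 1) z := by
            rw [hM n (Nat.lt_succ_self n)]; ring
  constructor
  · intro h j
    induction j using Nat.strong_induction_on with
    | _ j IH =>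
      intro hjk
      have hMi : ∀ i, i < j → M i = 0 := fun i hi => IH i hi (hi.trans hjk)
      have h2 : (fun z : ℝ => z ^ (j + 1) * G 0 z) =O[atTop]
          fun z : ℝ => z ^ (j + 1) * (z ^ (k + 1))⁻¹ :=
        (isBigO_refl (fun z : ℝ => z ^ (j + 1)) atTop).mul h
      have h4 : Tendsto (fun z : ℝ => (z ^ (k - j))⁻¹) atTop (nhds 0) := by
        exact tendsto_inv_atTop_zero.comp (tendsto_pow_atTop (n := k - j) (by omega))
      have h3 : Tendsto (fun z : ℝ => z ^ (j + 1) * (z ^ (k + 1))⁻¹) atTop (nhds 0) := by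
        refine h4.congr' ?_
        filter_upwards [eventually_gt_atTop (0 : ℝ)] with z hz
        have hz0 : z ≠ 0 := ne_of_gt hz
        have hkj : k + 1 = (j + 1) + (k - j) := by omega
        rw [hkj, pow_add z (j + 1) (k - j), mul_inv, ← mul_assoc, mul_inv_cancel₀ (pow_ne_zero _ hz0), one_mul]
      have h5 : Tendsto (fun z : ℝ => z ^ (j + 1) * G 0 z) atTop (nhds 0) :=
        h2.trans_tendsto h3
      have h6 : Tendsto (fun z : ℝ => (-1 : ℝ) ^ j * (M j - G (j + 1) z)) atTop (nhds 0) := by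
        refine h5.congr' ?_
        filter_upwards [eventually_gt_atTop (0 : ℝ)] with z hz
        calc z ^ (j + 1) * G 0 z = z * (z ^ j * G 0 z) := by ring
          _ = z * ((-1 : ℝ) ^ j * G j z) := by rw [hpow j hMi z hz]
          _ = (-1 : ℝ) ^ j * (z * G j z) := by ring
          _ = (-1 : ℝ) ^ j * (M j - G (j + 1) z) := by rw [hrec j z hz]
      have h7 : Tendsto (fun z : ℝ => (-1 : ℝ) ^ j * (M j - G (j + 1) z)) atTop
          (nhds ((-1 : ℝ) ^ j * (M j - 0))) :=
        tendsto_const_nhds.mul (tendsto_const_nhds.sub (hGtend (j + 1)))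
      have h8 : (-1 : ℝ) ^ j * (M j - 0) = 0 := tendsto_nhds_unique h7 h6
      have h9 : (-1 : ℝ) ^ j ≠ 0 := pow_ne_zero _ (by norm_num)
      rcases mul_eq_zero.1 h8 with h | h
      · exact absurd h h9
      · linarith
  · intro hM
    have key : ∀ z : ℝ, 0 < z →
        z ^ (k + 1) * G 0 z = (-1 : ℝ) ^ k * (M k - G (k + 1) z) := by
      intro z hz
      calc z ^ (k + 1) * G 0 z = z * (z ^ k * G 0 z) := by ring
        _ = z * ((-1 : ℝ) ^ k * G k z) := by rw [hpow k hM z hz]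
        _ = (-1 : ℝ) ^ k * (z * G k z) := by ring
        _ = (-1 : ℝ) ^ k * (M k - G (k + 1) z) := by rw [hrec k z hz]
    have hb : Tendsto (fun z : ℝ => z ^ (k + 1) * G 0 z) atTop
        (nhds ((-1 : ℝ) ^ k * (M k - 0))) := by
      refine Tendsto.congr' ?_ (tendsto_const_nhds.mul (tendsto_const_nhds.sub (hGtend (k + 1))))
      filter_upwards [eventually_gt_atTop (0 : ℝ)] with z hz
      exact (key z hz).symm
    have hO1 : (fun z : ℝ => z ^ (k + 1) * G 0 z) =O[atTop] (fun _ : ℝ => (1 : ℝ)) :=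
      hb.isBigO_one ℝ
    have hO2 : (fun z : ℝ => (z ^ (k + 1))⁻¹ * (z ^ (k + 1) * G 0 z)) =O[atTop]
        (fun z : ℝ => (z ^ (k + 1))⁻¹ * 1) := (isBigO_refl _ _).mul hO1
    refine hO2.congr' ?_ ?_
    · filter_upwards [eventually_gt_atTop (0 : ℝ)] with z hz
      rw [← mul_assoc, inv_mul_cancel₀ (pow_ne_zero _ (ne_of_gt hz)), one_mul]
    · filter_upwards with z
      rw [mul_one]


/-- The third Hermite–Padé approximation condition
`P̂(z) + P(z) W(−z) + Q(z) Z(−z) = O(1/z^{k+1})`, with `P, P̂` determined by `Q`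
via the divided-difference formulas, is equivalent to the finite linear system
`∬ y^{j+1} Q(x)/(x(x+y)) dμ(x)dμ(y) = ∫ x^j dμ(x)` for `j = 0, …, k−1`. -/
theorem HP_third_condition_iff_linear_system
    (K k : ℕ) (hk : 1 ≤ k) (hK : k < K)
    (x a : Fin K → ℝ) (hx : StrictMono x) (hxp : ∀ p, 0 < x p)
    (ha : ∀ p, 0 < a p)
    (Q : Polynomial ℝ) (hQ0 : Q.eval 0 = 0) (hQd : Q.natDegree = k)
    (P Ph : ℝ → ℝ)
    (hP : ∀ z, P z =
      (∑ p, a p * ((Q.eval z - Q.eval (x p)) / (z - x p))) -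
        (∑ p, a p * Q.eval (x p) / x p) + 1)
    (hPh : ∀ z, Ph z =
      ∑ p, ∑ q, a p * a q *
        ((Q.eval z - Q.eval (x p)) / ((z - x p) * (x p + x q)))) :
    ((fun z : ℝ => Ph z + P z * (∑ p, a p / (-z - x p)) +
        Q.eval z * (∑ p, ∑ q, a p * a q / ((-z - x p) * (x p + x q))))
      =O[atTop] (fun z : ℝ => (z ^ (k + 1))⁻¹)) ↔
    (∀ j : Fin k,
      ∑ p, ∑ q, a p * a q * x q ^ ((j : ℕ) + 1) * Q.eval (x p) /
          (x p * (x p + x q)) =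
        ∑ p, a p * x p ^ (j : ℕ)) := by
  set c : Fin K → ℝ := fun q =>
    a q * ((∑ p, a p * x q * Q.eval (x p) / (x p * (x p + x q))) - 1) with hcdef
  have hFeq : (fun z : ℝ => Ph z + P z * (∑ p, a p / (-z - x p)) +
        Q.eval z * (∑ p, ∑ q, a p * a q / ((-z - x p) * (x p + x q))))
      =ᶠ[atTop] fun z : ℝ => ∑ q, c q / (z + x q) := by
    have hev : ∀ᶠ z : ℝ in atTop, ∀ p, x p < z :=
      eventually_all.2 fun p => eventually_gt_atTop (x p)
    filter_upwards [hev, eventually_gt_atTop (0 : ℝ)] with z hzx hz0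
    rw [hP z, hPh z]
    have e1 : ((∑ p, a p * ((Q.eval z - Q.eval (x p)) / (z - x p))) -
          (∑ p, a p * Q.eval (x p) / x p) + 1) * (∑ q, a q / (-z - x q))
        = (∑ p, ∑ q, (a p * ((Q.eval z - Q.eval (x p)) / (z - x p))) * (a q / (-z - x q)))
          - (∑ p, ∑ q, (a p * Q.eval (x p) / x p) * (a q / (-z - x q)))
          + (∑ q, a q / (-z - x q)) := by
      rw [add_mul, sub_mul, one_mul, Finset.sum_mul_sum, Finset.sum_mul_sum]
    have e2 : Q.eval z * (∑ p, ∑ q, a p * a q / ((-z - x p) * (x p + x q)))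
        = ∑ p, ∑ q, Q.eval z * (a q * a p / ((-z - x q) * (x q + x p))) := by
      simp only [Finset.mul_sum]
      exact Finset.sum_comm
    rw [e1, e2]
    have e3 : (∑ q, c q / (z + x q))
        = (∑ p, ∑ q, a p * a q * x q * Q.eval (x p) / (x p * (x p + x q) * (z + x q)))
          + ∑ q, a q / (-z - x q) := by
      have hq : ∀ q ∈ Finset.univ, c q / (z + x q)
          = (∑ p, a p * a q * x q * Q.eval (x p) / (x p * (x p + x q) * (z + x q)))
            + a q / (-z - x q) := by
        intro q _
        have h2 : z + x q ≠ 0 := by have := hxp q; positivity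
        have h2' : (-z - x q) = -(z + x q) := by ring
        simp only [hcdef]
        rw [h2', div_neg, ← sub_eq_add_neg]
        rw [mul_sub, mul_one, sub_div, Finset.mul_sum, Finset.sum_div]
        congr 1
        refine Finset.sum_congr rfl fun p _ => ?_
        have h4 : x p ≠ 0 := ne_of_gt (hxp p)
        have h3 : x p + x q ≠ 0 := by have := hxp p; have := hxp q; positivity
        field_simp
      rw [Finset.sum_congr rfl hq, Finset.sum_add_distrib]
      congr 1
      exact Finset.sum_comm
    rw [e3]
    have e4 : (∑ p, ∑ q,
          (a p * a q * ((Q.eval z - Q.eval (x p)) / ((z - x p) * (x p + x q)))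
            + (a p * ((Q.eval z - Q.eval (x p)) / (z - x p))) * (a q / (-z - x q))
            - a p * Q.eval (x p) / x p * (a q / (-z - x q))
            + Q.eval z * (a q * a p / ((-z - x q) * (x q + x p)))))
        = (∑ p, ∑ q, a p * a q * ((Q.eval z - Q.eval (x p)) / ((z - x p) * (x p + x q))))
          + (∑ p, ∑ q, (a p * ((Q.eval z - Q.eval (x p)) / (z - x p))) * (a q / (-z - x q)))
          - (∑ p, ∑ q, (a p * Q.eval (x p) / x p) * (a q / (-z - x q)))
          + (∑ p, ∑ q, Q.eval z * (a q * a p / ((-z - x q) * (x q + x p)))) := by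
      simp only [Finset.sum_add_distrib, Finset.sum_sub_distrib]
    have e5 : (∑ p, ∑ q,
          (a p * a q * ((Q.eval z - Q.eval (x p)) / ((z - x p) * (x p + x q)))
            + (a p * ((Q.eval z - Q.eval (x p)) / (z - x p))) * (a q / (-z - x q))
            - a p * Q.eval (x p) / x p * (a q / (-z - x q))
            + Q.eval z * (a q * a p / ((-z - x q) * (x q + x p)))))
        = ∑ p, ∑ q, a p * a q * x q * Q.eval (x p) / (x p * (x p + x q) * (z + x q)) := by
      refine Finset.sum_congr rfl fun p _ => Finset.sum_congr rfl fun q _ => ?_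
      exact pair_identity z (x p) (x q) (a p) (a q) (Q.eval z) (Q.eval (x p))
        (hxp p) (hxp q) (hzx p)
    linarith [e4, e5]
  rw [isBigO_congr hFeq EventuallyEq.rfl, frac_bigO_iff K k x c hxp]
  have hconv : ∀ j : ℕ, ∑ q, c q * x q ^ j
      = (∑ p, ∑ q, a p * a q * x q ^ (j + 1) * Q.eval (x p) / (x p * (x p + x q)))
        - ∑ p, a p * x p ^ j := by
    intro j
    rw [show (∑ p, ∑ q, a p * a q * x q ^ (j + 1) * Q.eval (x p) / (x p * (x p + x q)))
        = ∑ q, ∑ p, a p * a q * x q ^ (j + 1) * Q.eval (x p) / (x p * (x p + x q))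
        from Finset.sum_comm, ← Finset.sum_sub_distrib]
    refine Finset.sum_congr rfl fun q _ => ?_
    simp only [hcdef]
    rw [mul_sub, mul_one, sub_mul, Finset.mul_sum, Finset.sum_mul]
    congr 1
    refine Finset.sum_congr rfl fun p _ => ?_
    have h4 : x p ≠ 0 := ne_of_gt (hxp p)
    have h3 : x p + x q ≠ 0 := by have := hxp p; have := hxp q; positivity
    field_simp
    ring
  constructor
  · intro H j
    exact sub_eq_zero.mp ((hconv j).symm.trans (H j j.isLt))
  · intro H j hj
    rw [hconv j]
    exact sub_eq_zero.mpr (H ⟨j, hj⟩)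
end

section
/- For the Novikov peakon transition matrix S_k(z) = [[1−z m_k², −2z m_k e^{−x_k}, −z² m_k² e^{−2x_k}], [m_k e^{x_k}, 1, z m_k e^{−x_k}], [m_k² e^{2x_k}, 2 m_k e^{x_k}, 1 + z m_k²]], one has det S_k(z) = 1, K⁻¹ S_k(z)ᵀ K = S_k(−z), and S_k(z)⁻¹ = J S_k(z) J, where K = [[0,0,1],[0,2,0],[1,0,0]] and J = diag(1,−1,1). -/
open Matrix

/-- The Novikov peakon transition matrix `S_k(z)`. -/
noncomputable def Snov (m x z : ℝ) : Matrix (Fin 3) (Fin 3) ℝ :=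
  !![1 - z * m ^ 2, -2 * z * m * Real.exp (-x), -z ^ 2 * m ^ 2 * Real.exp (-2 * x);
     m * Real.exp x, 1, z * m * Real.exp (-x);
     m ^ 2 * Real.exp (2 * x), 2 * m * Real.exp x, 1 + z * m ^ 2]

/-- `K = [[0,0,1],[0,2,0],[1,0,0]]`. -/
def Kmat : Matrix (Fin 3) (Fin 3) ℝ := !![0, 0, 1; 0, 2, 0; 1, 0, 0]

/-- `J = diag(1,−1,1)`. -/
def Jmat : Matrix (Fin 3) (Fin 3) ℝ := !![1, 0, 0; 0, -1, 0; 0, 0, 1]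

lemma Kmat_inv : Kmat⁻¹ = !![0, 0, 1; 0, (1:ℝ)/2, 0; 1, 0, 0] := by
  apply Matrix.inv_eq_right_inv
  norm_num [Kmat, Matrix.mul_fin_three]
  exact (Matrix.one_fin_three).symm

/-- A form of `Snov` with only `Real.exp x` appearing. -/
lemma Snov_eq (m x z : ℝ) : Snov m x z =
    !![1 - z * m ^ 2, -2 * z * m * (Real.exp x)⁻¹, -z ^ 2 * m ^ 2 * ((Real.exp x) ^ 2)⁻¹;
       m * Real.exp x, 1, z * m * (Real.exp x)⁻¹;
       m ^ 2 * (Real.exp x) ^ 2, 2 * m * Real.exp x, 1 + z * m ^ 2] := by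
  have h1 : Real.exp (-x) = (Real.exp x)⁻¹ := Real.exp_neg x
  have h2 : Real.exp (2 * x) = (Real.exp x) ^ 2 := by rw [two_mul, Real.exp_add, sq]
  have h3 : Real.exp (-2 * x) = ((Real.exp x) ^ 2)⁻¹ := by
    rw [show (-2 : ℝ) * x = -(2 * x) by ring, Real.exp_neg, h2]
  rw [Snov, h1, h2, h3]

lemma Snov_transpose (m x z : ℝ) : (Snov m x z)ᵀ =
    !![1 - z * m ^ 2, m * Real.exp x, m ^ 2 * (Real.exp x) ^ 2;
       -2 * z * m * (Real.exp x)⁻¹, 1, 2 * m * Real.exp x;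
       -z ^ 2 * m ^ 2 * ((Real.exp x) ^ 2)⁻¹, z * m * (Real.exp x)⁻¹, 1 + z * m ^ 2] := by
  rw [Snov_eq]
  ext i j
  fin_cases i <;> fin_cases j <;> rfl

set_option maxHeartbeats 1000000 in
/-- Symmetry properties of the Novikov peakon transition matrix:
`det S_k(z) = 1`, `K⁻¹ S_k(z)ᵀ K = S_k(−z)`, and `S_k(z)⁻¹ = J S_k(z) J`. -/
theorem Snov_symmetries (m x z : ℝ) (hm : 0 < m) :
    (Snov m x z).det = 1 ∧
    Kmat⁻¹ * (Snov m x z)ᵀ * Kmat = Snov m x (-z) ∧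
    (Snov m x z)⁻¹ = Jmat * Snov m x z * Jmat := by
  have he : Real.exp x ≠ 0 := Real.exp_ne_zero x
  refine ⟨?_, ?_, ?_⟩
  · rw [Snov_eq, Matrix.det_fin_three]
    simp
    field_simp
    ring
  · rw [Kmat_inv, Snov_transpose, Snov_eq]
    ext i j
    fin_cases i <;> fin_cases j <;>
      · simp [Kmat, Matrix.mul_apply, Fin.sum_univ_three, Matrix.vecHead, Matrix.vecTail]
        try ring
  · apply Matrix.inv_eq_right_inv
    rw [Snov_eq]
    ext i j
    fin_cases i <;> fin_cases j <;>
      · simp [Jmat, Matrix.mul_apply, Fin.sum_univ_three, Matrix.one_apply, Matrix.vecHead, Matrix.vecTail]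
        try field_simp
        try ring
end
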